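/- arXiv:1906.05664 — 6 statements merged into one kernel-verified Lean document; each statement's English description precedes it below -/
import Mathlib

section
/- Let P be a probability distribution and Q a full-support probability distribution on a finite set S, f : S → ℝ, and Q_α the exponential tilting of Q by α·f. If α* minimizes F(α) := CE(P‖Q_α) over α ∈ ℝ (and the minimum is attained at an interior point), then E_P[f] = E_{Q_{α*}}[f]. -/
/-- Calibration property: at an interior minimizer `α*` of the cross entropy of the
tilted family, `E_P[f] = E_{Q_{α*}}[f]`. -/
theorem stmt9 {S : Type*} [Fintype S] (P Q f : S → ℝ) (αstar : ℝ)
    (hP0 : ∀ x, 0 ≤ P x) (hP1 : ∑ x, P x = 1)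
    (hQ0 : ∀ x, 0 < Q x) (hQ1 : ∑ x, Q x = 1)
    (hmin : ∀ α : ℝ,
      (-∑ x, P x *
          Real.log (Real.exp (αstar * f x) * Q x / (∑ y, Real.exp (αstar * f y) * Q y))) ≤
        -∑ x, P x *
          Real.log (Real.exp (α * f x) * Q x / (∑ y, Real.exp (α * f y) * Q y))) :
    (∑ x, P x * f x) =
      ∑ x, f x * (Real.exp (αstar * f x) * Q x / (∑ y, Real.exp (αstar * f y) * Q y)) := by
  classical
  have hne : (Finset.univ : Finset S).Nonempty := by
    rcases (Finset.univ : Finset S).eq_empty_or_nonempty with h | h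
    · rw [h] at hQ1; simp at hQ1
    · exact h
  set Z : ℝ → ℝ := fun α => ∑ y, Real.exp (α * f y) * Q y with hZdef
  have hZpos : ∀ α, 0 < Z α := fun α =>
    Finset.sum_pos (fun y _ => mul_pos (Real.exp_pos _) (hQ0 y)) hne
  set F : ℝ → ℝ := fun α =>
    Real.log (Z α) - α * (∑ x, P x * f x) - ∑ x, P x * Real.log (Q x) with hFdef
  -- rewrite cross entropy as F
  have hCE : ∀ α : ℝ,
      (-∑ x, P x * Real.log (Real.exp (α * f x) * Q x / (∑ y, Real.exp (α * f y) * Q y)))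
        = F α := by
    intro α
    have hrw : ∀ x : S,
        P x * Real.log (Real.exp (α * f x) * Q x / Z α)
          = P x * (α * f x) + P x * Real.log (Q x) - P x * Real.log (Z α) := by
      intro x
      rw [Real.log_div (mul_ne_zero (Real.exp_ne_zero _) (hQ0 x).ne') (hZpos α).ne',
        Real.log_mul (Real.exp_ne_zero _) (hQ0 x).ne', Real.log_exp]
      ring
    calc (-∑ x, P x * Real.log (Real.exp (α * f x) * Q x / (∑ y, Real.exp (α * f y) * Q y)))
        = -∑ x, (P x * (α * f x) + P x * Real.log (Q x) - P x * Real.log (Z α)) := by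
          simp only [← hrw]
          rfl
      _ = F α := by
          simp only [Finset.sum_sub_distrib, Finset.sum_add_distrib, hFdef,
            ← Finset.sum_mul, hP1]
          have hs : ∑ x, P x * (α * f x) = α * ∑ x, P x * f x := by
            rw [Finset.mul_sum]; exact Finset.sum_congr rfl fun x _ => by ring
          rw [hs]; ring
  -- derivative of Z
  have hZderiv : ∀ α : ℝ, HasDerivAt Z (∑ y, f y * Real.exp (α * f y) * Q y) α := by
    intro α
    have : HasDerivAt (fun a : ℝ => ∑ y, Real.exp (a * f y) * Q y)
        (∑ y, f y * Real.exp (α * f y) * Q y) α := by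
      apply HasDerivAt.fun_sum
      intro y _
      have h1 : HasDerivAt (fun a : ℝ => a * f y) (f y) α := hasDerivAt_mul_const (f y)
      have h2 := (h1.exp).mul_const (Q y)
      convert h2 using 1
      · exact rfl
      ring
    exact this
  have hFderiv : HasDerivAt F
      ((∑ y, f y * Real.exp (αstar * f y) * Q y) / Z αstar - ∑ x, P x * f x) αstar := by
    have hlog := (hZderiv αstar).log (hZpos αstar).ne'
    have hlin : HasDerivAt (fun α : ℝ => α * (∑ x, P x * f x)) (∑ x, P x * f x) αstar :=
      hasDerivAt_mul_const _
    have := (hlog.sub hlin).sub_const (∑ x, P x * Real.log (Q x))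
    exact this
  have hloc : IsLocalMin F αstar := by
    apply Filter.Eventually.of_forall
    intro α
    rw [← hCE α, ← hCE αstar]
    exact hmin α
  have hzero := hloc.hasDerivAt_eq_zero hFderiv
  have h1 : (∑ y, f y * Real.exp (αstar * f y) * Q y) / Z αstar = ∑ x, P x * f x := by
    linarith
  rw [← h1, Finset.sum_div]
  apply Finset.sum_congr rfl
  intro x _
  ring
end

section
/- Let P, Q be probability distributions on a finite set with Q full-support, let f : S → ℝ, and suppose Var_{Q_α}[f] ≤ σ² for all α ∈ ℝ, where Q_α is the exponential tilting of Q by α·f. Then min_α CE(P‖Q_α) ≤ CE(P‖Q) − (E_P[f] − E_Q[f])²/(2σ²). -/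
/-- Calibration improvement: if `Var_{Q_α}[f] ≤ σ²` for all `α`, then
`min_α CE(P‖Q_α) ≤ CE(P‖Q) - (E_P f - E_Q f)² / (2σ²)`. -/
theorem stmt10 {S : Type*} [Fintype S] (P Q f : S → ℝ) (σ2 : ℝ)
    (hP0 : ∀ x, 0 ≤ P x) (hP1 : ∑ x, P x = 1)
    (hQ0 : ∀ x, 0 < Q x) (hQ1 : ∑ x, Q x = 1)
    (hσ : 0 < σ2)
    (hvar : ∀ α : ℝ,
      (∑ x, f x ^ 2 * (Real.exp (α * f x) * Q x / (∑ y, Real.exp (α * f y) * Q y))) -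
          (∑ x, f x * (Real.exp (α * f x) * Q x / (∑ y, Real.exp (α * f y) * Q y))) ^ 2 ≤
        σ2) :
    ∃ α : ℝ,
      (-∑ x, P x *
          Real.log (Real.exp (α * f x) * Q x / (∑ y, Real.exp (α * f y) * Q y))) ≤
        (-∑ x, P x * Real.log (Q x)) -
          ((∑ x, P x * f x) - ∑ x, Q x * f x) ^ 2 / (2 * σ2) := by
  classical
  have hne : (Finset.univ : Finset S).Nonempty := by
    by_contra h
    rw [Finset.not_nonempty_iff_eq_empty] at h
    simp [h] at hQ1
  set Z : ℝ → ℝ := fun a => ∑ x, Real.exp (a * f x) * Q x with hZdef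
  set Z1 : ℝ → ℝ := fun a => ∑ x, f x * (Real.exp (a * f x) * Q x) with hZ1def
  set Z2 : ℝ → ℝ := fun a => ∑ x, f x ^ 2 * (Real.exp (a * f x) * Q x) with hZ2def
  have hZpos : ∀ a, 0 < Z a := fun a =>
    Finset.sum_pos (fun x _ => mul_pos (Real.exp_pos _) (hQ0 x)) hne
  have hZ0 : Z 0 = 1 := by simp [hZdef, hQ1]
  have hZd : ∀ a, HasDerivAt Z (Z1 a) a := by
    intro a
    apply HasDerivAt.fun_sum
    intro x _
    have h1 : HasDerivAt (fun a : ℝ => a * f x) (f x) a := hasDerivAt_mul_const (f x)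
    have := (h1.exp).mul_const (Q x)
    refine this.congr_deriv ?_; ring
  have hZ1d : ∀ a, HasDerivAt Z1 (Z2 a) a := by
    intro a
    apply HasDerivAt.fun_sum
    intro x _
    have h1 : HasDerivAt (fun a : ℝ => a * f x) (f x) a := hasDerivAt_mul_const (f x)
    have := ((h1.exp).mul_const (Q x)).const_mul (f x)
    refine this.congr_deriv ?_; ring
  have hvar' : ∀ a, Z2 a / Z a - (Z1 a / Z a) ^ 2 ≤ σ2 := by
    intro a
    have h := hvar a
    have e2 : Z2 a / Z a = ∑ x, f x ^ 2 * (Real.exp (a * f x) * Q x / Z a) := by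
      rw [hZ2def]; rw [Finset.sum_div]
      exact Finset.sum_congr rfl fun x _ => by ring
    have e1 : Z1 a / Z a = ∑ x, f x * (Real.exp (a * f x) * Q x / Z a) := by
      rw [hZ1def]; rw [Finset.sum_div]
      exact Finset.sum_congr rfl fun x _ => by ring
    rw [e1, e2]; exact h
  set c : ℝ := Z1 0 with hcdef
  have hc : c = ∑ x, Q x * f x := by
    simp [hcdef, hZ1def, mul_comm]
  set φ : ℝ → ℝ := fun a => a * c + σ2 * a ^ 2 / 2 - Real.log (Z a) with hφdef
  set φ' : ℝ → ℝ := fun a => c + σ2 * a - Z1 a / Z a with hφ'def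
  have hφd : ∀ a, HasDerivAt φ (φ' a) a := by
    intro a
    have h1 : HasDerivAt (fun a : ℝ => a * c + σ2 * a ^ 2 / 2) (c + σ2 * a) a := by
      have ha : HasDerivAt (fun a : ℝ => a * c) c a := hasDerivAt_mul_const c
      have hb : HasDerivAt (fun a : ℝ => σ2 * a ^ 2 / 2) (σ2 * a) a := by
        have := ((hasDerivAt_pow 2 a).const_mul σ2).div_const 2
        refine this.congr_deriv ?_; ring
      exact ha.add hb
    have h2 : HasDerivAt (fun a => Real.log (Z a)) (Z1 a / Z a) a :=
      (hZd a).log (hZpos a).ne'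
    exact h1.sub h2
  have hφ'd : ∀ a, HasDerivAt φ' (σ2 - (Z2 a / Z a - (Z1 a / Z a) ^ 2)) a := by
    intro a
    have h1 : HasDerivAt (fun a : ℝ => c + σ2 * a) σ2 a := by
      simpa using ((hasDerivAt_id a).const_mul σ2).const_add c
    have h2 : HasDerivAt (fun a => Z1 a / Z a)
        ((Z2 a * Z a - Z1 a * Z1 a) / Z a ^ 2) a :=
      (hZ1d a).div (hZd a) (hZpos a).ne'
    have := h1.sub h2
    refine this.congr_deriv ?_
    have hz := (hZpos a).ne'
    field_simp
  have hφ'mono : Monotone φ' :=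
    monotone_of_hasDerivAt_nonneg hφ'd (fun a => by
      have := hvar' a; simp only [Pi.zero_apply]; linarith)
  have hφ'0 : φ' 0 = 0 := by
    simp [hφ'def, hZ0, hcdef]
  have hφ0 : φ 0 = 0 := by simp [hφdef, hZ0]
  have hφnonneg : ∀ a, 0 ≤ φ a := by
    intro a
    rcases le_total 0 a with ha | ha
    · have hmono : MonotoneOn φ (Set.Ici 0) := by
        apply monotoneOn_of_hasDerivWithinAt_nonneg (convex_Ici 0)
          (fun x _ => ((hφd x).continuousAt).continuousWithinAt)
          (f' := φ') (fun x _ => (hφd x).hasDerivWithinAt)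
        intro x hx
        rw [interior_Ici] at hx
        rw [← hφ'0]
        exact hφ'mono (le_of_lt hx)
      rw [← hφ0]
      exact hmono Set.self_mem_Ici ha ha
    · have hanti : AntitoneOn φ (Set.Iic 0) := by
        apply antitoneOn_of_hasDerivWithinAt_nonpos (convex_Iic 0)
          (fun x _ => ((hφd x).continuousAt).continuousWithinAt)
          (f' := φ') (fun x _ => (hφd x).hasDerivWithinAt)
        intro x hx
        rw [interior_Iic] at hx
        rw [← hφ'0]
        exact hφ'mono (le_of_lt hx)
      rw [← hφ0]
      exact hanti ha Set.self_mem_Iic ha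
  -- key cross-entropy identity
  have key : ∀ a : ℝ,
      (-∑ x, P x * Real.log (Real.exp (a * f x) * Q x / Z a)) =
        -(a * (∑ x, P x * f x)) - (∑ x, P x * Real.log (Q x)) + Real.log (Z a) := by
    intro a
    have hterm : ∀ x, P x * Real.log (Real.exp (a * f x) * Q x / Z a) =
        a * (P x * f x) + P x * Real.log (Q x) - Real.log (Z a) * P x := by
      intro x
      rw [Real.log_div (mul_pos (Real.exp_pos _) (hQ0 x)).ne' (hZpos a).ne',
        Real.log_mul (Real.exp_ne_zero _) (hQ0 x).ne', Real.log_exp]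
      ring
    rw [Finset.sum_congr rfl fun x _ => hterm x]
    rw [Finset.sum_sub_distrib, Finset.sum_add_distrib, ← Finset.mul_sum, ← Finset.mul_sum,
      hP1, mul_one]
    ring
  set Δ : ℝ := (∑ x, P x * f x) - ∑ x, Q x * f x with hΔdef
  refine ⟨Δ / σ2, ?_⟩
  have hkey := key (Δ / σ2)
  rw [hkey]
  have hφΔ := hφnonneg (Δ / σ2)
  have hlog : Real.log (Z (Δ / σ2)) ≤ (Δ / σ2) * c + σ2 * (Δ / σ2) ^ 2 / 2 := by
    rw [hφdef] at hφΔ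
    simp only at hφΔ
    linarith
  have hc' : c = (∑ x, P x * f x) - Δ := by rw [hΔdef, hc]; ring
  have hq : (Δ / σ2) * c + σ2 * (Δ / σ2) ^ 2 / 2 =
      (Δ / σ2) * (∑ x, P x * f x) - Δ ^ 2 / (2 * σ2) := by
    rw [hc']
    field_simp
    ring
  rw [hq] at hlog
  linarith
end

section
/- Let P, Q be probability distributions on a finite set with Q full-support. For α > −1 define Q_α(x) := Q(x)^{1+α}/Z(α), Z(α) = Σ_x Q(x)^{1+α}. If α* minimizes CE(P‖Q_α) (attained at an interior point), then CE(P‖Q_{α*}) = H(Q_{α*}), i.e., the cross entropy of the calibrated model with respect to P equals the Shannon entropy of the calibrated model. -/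
open Real Finset


/-- Entropy rate calibration: powering the model `Q` by `1+α` and fitting `α`
makes the cross entropy against `P` equal the entropy of the calibrated model. -/
theorem stmt11 {S : Type*} [Fintype S] (P Q : S → ℝ) (αstar : ℝ)
    (hP0 : ∀ x, 0 ≤ P x) (hP1 : ∑ x, P x = 1)
    (hQ0 : ∀ x, 0 < Q x) (hQ1 : ∑ x, Q x = 1)
    (hmin : ∀ α : ℝ,
      (-∑ x, P x * Real.log (Q x ^ (1 + αstar) / (∑ y, Q y ^ (1 + αstar)))) ≤
        -∑ x, P x * Real.log (Q x ^ (1 + α) / (∑ y, Q y ^ (1 + α)))) :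
    (-∑ x, P x * Real.log (Q x ^ (1 + αstar) / (∑ y, Q y ^ (1 + αstar)))) =
      -∑ x, (Q x ^ (1 + αstar) / (∑ y, Q y ^ (1 + αstar))) *
        Real.log (Q x ^ (1 + αstar) / (∑ y, Q y ^ (1 + αstar))) := by
  classical
  cases isEmpty_or_nonempty S with
  | inl h => simp at hP1
  | inr h =>
  set A : ℝ := ∑ x, P x * Real.log (Q x) with hA
  have hZpos : ∀ α : ℝ, 0 < ∑ y, Q y ^ (1 + α) := fun α =>
    Finset.sum_pos (fun y _ => Real.rpow_pos_of_pos (hQ0 y) _) Finset.univ_nonempty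
  have hlog : ∀ (α : ℝ) (x : S),
      Real.log (Q x ^ (1 + α) / (∑ y, Q y ^ (1 + α)))
        = (1 + α) * Real.log (Q x) - Real.log (∑ y, Q y ^ (1 + α)) := by
    intro α x
    rw [Real.log_div (Real.rpow_pos_of_pos (hQ0 x) _).ne' (hZpos α).ne',
      Real.log_rpow (hQ0 x)]
  have hg : ∀ α : ℝ,
      (-∑ x, P x * Real.log (Q x ^ (1 + α) / (∑ y, Q y ^ (1 + α))))
        = -((1 + α) * A) + Real.log (∑ y, Q y ^ (1 + α)) := by
    intro α
    have h1 : ∑ x, P x * ((1 + α) * Real.log (Q x)) = (1 + α) * A := by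
      rw [hA, Finset.mul_sum]
      exact Finset.sum_congr rfl fun x _ => by ring
    have h2 : ∑ x, P x * Real.log (∑ y, Q y ^ (1 + α))
        = Real.log (∑ y, Q y ^ (1 + α)) := by
      rw [← Finset.sum_mul, hP1, one_mul]
    simp only [hlog, mul_sub]
    rw [Finset.sum_sub_distrib, h1, h2]
    ring
  -- derivative of Z
  have hZd : ∀ α : ℝ, HasDerivAt (fun t : ℝ => ∑ y, Q y ^ (1 + t))
      (∑ y, Q y ^ (1 + α) * Real.log (Q y)) α := by
    intro α
    apply HasDerivAt.fun_sum
    intro y _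
    have h1 : HasDerivAt (fun t : ℝ => (1 + t) * Real.log (Q y))
        (Real.log (Q y)) α := by
      simpa using ((hasDerivAt_id α).const_add 1).mul_const (Real.log (Q y))
    have h2 := h1.exp
    have hrw : (fun t : ℝ => Real.exp ((1 + t) * Real.log (Q y)))
        = fun t : ℝ => Q y ^ (1 + t) := by
      funext t
      rw [Real.rpow_def_of_pos (hQ0 y), mul_comm]
    rw [hrw] at h2
    have : Real.exp ((1 + α) * Real.log (Q y)) = Q y ^ (1 + α) := by
      rw [Real.rpow_def_of_pos (hQ0 y), mul_comm]
    rw [this] at h2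
    exact h2
  set Zs : ℝ := ∑ y, Q y ^ (1 + αstar) with hZs
  set Z' : ℝ := ∑ y, Q y ^ (1 + αstar) * Real.log (Q y) with hZ'
  have hgd : HasDerivAt
      (fun α : ℝ => -((1 + α) * A) + Real.log (∑ y, Q y ^ (1 + α)))
      (-A + Z' / Zs) αstar := by
    have h1 : HasDerivAt (fun α : ℝ => -((1 + α) * A)) (-A) αstar := by
      simpa using (((hasDerivAt_id αstar).const_add 1).mul_const A).fun_neg
    exact h1.add ((hZd αstar).log (hZpos αstar).ne')
  have hloc : IsLocalMin
      (fun α : ℝ => -((1 + α) * A) + Real.log (∑ y, Q y ^ (1 + α))) αstar := by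
    apply Filter.Eventually.of_forall
    intro b
    have := hmin b
    rw [hg αstar, hg b] at this
    exact this
  have hd0 : -A + Z' / Zs = 0 := hloc.hasDerivAt_eq_zero hgd
  have hAeq : A = Z' / Zs := by linarith
  -- compute RHS
  have hRHS : (∑ x, (Q x ^ (1 + αstar) / Zs) * Real.log (Q x ^ (1 + αstar) / Zs))
      = (1 + αstar) * (Z' / Zs) - Real.log Zs := by
    have h1 : ∑ x, (Q x ^ (1 + αstar) / Zs) * ((1 + αstar) * Real.log (Q x))
        = (1 + αstar) * (Z' / Zs) := by
      rw [hZ', Finset.sum_div, Finset.mul_sum]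
      exact Finset.sum_congr rfl fun x _ => by ring
    have hsum1 : ∑ x, Q x ^ (1 + αstar) / Zs = 1 := by
      rw [← Finset.sum_div, ← hZs, div_self (hZpos αstar).ne']
    have h2 : ∑ x, (Q x ^ (1 + αstar) / Zs) * Real.log Zs = Real.log Zs := by
      rw [← Finset.sum_mul, hsum1, one_mul]
    have hlog' : ∀ x, Real.log (Q x ^ (1 + αstar) / Zs) = (1 + αstar) * Real.log (Q x) - Real.log Zs :=
      fun x => hlog αstar x
    simp only [hlog', mul_sub]
    rw [Finset.sum_sub_distrib, h1, h2]
  rw [hg αstar, hRHS, hAeq]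
  ring
end

section
/- Let P, Q be probability distributions on a finite set with Q full-support, and suppose KL(P‖Q) ≤ δ. Let Q_α(x) := Q(x)^{1+α}/Z(α) and α* = argmin_α CE(P‖Q_α). Then |H(P) − H(Q_{α*})| ≤ δ, where H denotes Shannon entropy. -/
open Real Finset

/-- Gibbs' inequality: cross entropy ≥ entropy. -/
lemma gibbs_aux {S : Type*} [Fintype S] (P R : S → ℝ)
    (hP0 : ∀ x, 0 ≤ P x) (hP1 : ∑ x, P x = 1)
    (hR0 : ∀ x, 0 < R x) (hR1 : ∑ x, R x = 1) :
    (-∑ x, P x * Real.log (P x)) ≤ -∑ x, P x * Real.log (R x) := by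
  have key : ∑ x, P x * Real.log (R x / P x) ≤ 0 := by
    have h1 : ∀ x ∈ Finset.univ (α := S), P x * Real.log (R x / P x) ≤ R x - P x := by
      intro x _
      rcases eq_or_lt_of_le (hP0 x) with h | h
      · simp [← h, (hR0 x).le]
      · have hy : 0 < R x / P x := div_pos (hR0 x) h
        have := Real.log_le_sub_one_of_pos hy
        calc P x * Real.log (R x / P x) ≤ P x * (R x / P x - 1) := by
              exact mul_le_mul_of_nonneg_left this (hP0 x)
          _ = R x - P x := by field_simp
    calc ∑ x, P x * Real.log (R x / P x) ≤ ∑ x, (R x - P x) := Finset.sum_le_sum h1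
      _ = 0 := by rw [Finset.sum_sub_distrib, hP1, hR1]; ring
  have heq : ∑ x, P x * Real.log (R x / P x)
      = ∑ x, P x * Real.log (R x) - ∑ x, P x * Real.log (P x) := by
    rw [← Finset.sum_sub_distrib]
    refine Finset.sum_congr rfl fun x _ => ?_
    rcases eq_or_lt_of_le (hP0 x) with h | h
    · simp [← h]
    · rw [Real.log_div (hR0 x).ne' h.ne']; ring
  linarith

/-- Entropy rate calibration, second claim: if `KL(P‖Q) ≤ δ`, then the entropy of the
calibrated model `Q_{α*}` is within `δ` of the entropy of `P`. -/
theorem stmt12 {S : Type*} [Fintype S] (P Q : S → ℝ) (αstar δ : ℝ)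
    (hP0 : ∀ x, 0 ≤ P x) (hP1 : ∑ x, P x = 1)
    (hQ0 : ∀ x, 0 < Q x) (hQ1 : ∑ x, Q x = 1)
    (hKL : ∑ x, P x * Real.log (P x / Q x) ≤ δ)
    (hmin : ∀ α : ℝ,
      (-∑ x, P x * Real.log (Q x ^ (1 + αstar) / (∑ y, Q y ^ (1 + αstar)))) ≤
        -∑ x, P x * Real.log (Q x ^ (1 + α) / (∑ y, Q y ^ (1 + α)))) :
    |(-∑ x, P x * Real.log (P x)) -
        (-∑ x, (Q x ^ (1 + αstar) / (∑ y, Q y ^ (1 + αstar))) *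
          Real.log (Q x ^ (1 + αstar) / (∑ y, Q y ^ (1 + αstar))))| ≤ δ := by
  classical
  have hne : Nonempty S := by
    by_contra h
    rw [not_nonempty_iff] at h
    simp at hP1
  set c : ℝ := ∑ x, P x * Real.log (Q x) with hc
  set g : ℝ → ℝ := fun α => ∑ x, Q x ^ (1 + α) with hg
  have hgpos : ∀ α, 0 < g α := fun α =>
    Finset.sum_pos (fun x _ => Real.rpow_pos_of_pos (hQ0 x) _) Finset.univ_nonempty
  set Z : ℝ := g αstar with hZ
  have hZpos : 0 < Z := hgpos αstar
  -- cross entropy in closed form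
  have hCE : ∀ α : ℝ, (-∑ x, P x * Real.log (Q x ^ (1 + α) / g α))
      = -(1 + α) * c + Real.log (g α) := by
    intro α
    have : ∀ x, P x * Real.log (Q x ^ (1 + α) / g α)
        = (1 + α) * (P x * Real.log (Q x)) - P x * Real.log (g α) := by
      intro x
      rw [Real.log_div (Real.rpow_pos_of_pos (hQ0 x) _).ne' (hgpos α).ne',
        Real.log_rpow (hQ0 x)]
      ring
    simp only [this, Finset.sum_sub_distrib, ← Finset.mul_sum, ← Finset.sum_mul]
    rw [hP1]
    ring
  set f : ℝ → ℝ := fun α => -(1 + α) * c + Real.log (g α) with hf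
  -- derivative of g
  have hgd : ∀ α : ℝ, HasDerivAt g (∑ x, Q x ^ (1 + α) * Real.log (Q x)) α := by
    intro α
    apply HasDerivAt.fun_sum
    intro x _
    have h1 : HasDerivAt (fun α : ℝ => Q x ^ α) (Q x ^ (1 + α) * Real.log (Q x)) (1 + α) :=
      (Real.hasStrictDerivAt_const_rpow (hQ0 x) (1 + α)).hasDerivAt
    have h2 : HasDerivAt (fun α : ℝ => 1 + α) 1 α := by
      simpa using (hasDerivAt_id α).const_add 1
    have h3 := h1.comp α h2
    rw [mul_one] at h3
    exact h3
  have hfd : HasDerivAt f (-c + (∑ x, Q x ^ (1 + αstar) * Real.log (Q x)) / Z) αstar := by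
    have h1 : HasDerivAt (fun α : ℝ => -(1 + α) * c) (-c) αstar := by
      have : HasDerivAt (fun α : ℝ => -(1 + α) * c) ((-1) * c) αstar := by
        apply HasDerivAt.mul_const
        exact ((hasDerivAt_id' αstar).const_add 1).neg
      simpa using this
    exact h1.add ((hgd αstar).log hZpos.ne')
  -- minimality ⇒ derivative zero
  have hmin' : IsLocalMin f αstar := by
    apply IsMinOn.isLocalMin (s := Set.univ) _ Filter.univ_mem
    rw [isMinOn_univ_iff]
    intro α
    have := hmin α
    rwa [hCE, hCE] at this
  have hder0 := hmin'.hasDerivAt_eq_zero hfd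
  have hstat : ∑ x, Q x ^ (1 + αstar) * Real.log (Q x) = c * Z := by
    field_simp at hder0
    linarith
  -- entropy of calibrated model equals f αstar
  have hHQ : (-∑ x, (Q x ^ (1 + αstar) / Z) * Real.log (Q x ^ (1 + αstar) / Z))
      = f αstar := by
    have : ∀ x, (Q x ^ (1 + αstar) / Z) * Real.log (Q x ^ (1 + αstar) / Z)
        = (1 + αstar) / Z * (Q x ^ (1 + αstar) * Real.log (Q x))
          - Real.log Z / Z * Q x ^ (1 + αstar) := by
      intro x
      rw [Real.log_div (Real.rpow_pos_of_pos (hQ0 x) _).ne' hZpos.ne',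
        Real.log_rpow (hQ0 x)]
      ring
    simp only [this, Finset.sum_sub_distrib, ← Finset.mul_sum]
    rw [hstat]
    show -((1 + αstar) / Z * (c * Z) - Real.log Z / Z * g αstar) = f αstar
    rw [← hZ]
    field_simp [hf]
    ring
  -- Q_{αstar} is a probability distribution
  have hR1 : ∑ x, Q x ^ (1 + αstar) / Z = 1 := by
    rw [← Finset.sum_div]
    exact div_self hZpos.ne'
  -- lower bound : H(P) ≤ CE(P‖Q_{αstar}) = f αstar
  have hlow : (-∑ x, P x * Real.log (P x)) ≤ f αstar := by
    have := gibbs_aux P (fun x => Q x ^ (1 + αstar) / Z) hP0 hP1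
      (fun x => div_pos (Real.rpow_pos_of_pos (hQ0 x) _) hZpos) hR1
    rwa [hCE αstar] at this
  -- upper bound : f αstar ≤ f 0 = -c ≤ H(P) + δ
  have hf0 : f 0 = -c := by
    have : g 0 = 1 := by
      have h1 : ∀ x : S, Q x ^ ((1:ℝ) + 0) = Q x := fun x => by
        rw [show (1 : ℝ) + 0 = 1 by ring, Real.rpow_one]
      simp only [hg, h1, hQ1]
    simp [hf, this]
  have hKL' : -c ≤ (-∑ x, P x * Real.log (P x)) + δ := by
    have heq : ∑ x, P x * Real.log (P x / Q x)
        = ∑ x, P x * Real.log (P x) - c := by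
      rw [hc, ← Finset.sum_sub_distrib]
      refine Finset.sum_congr rfl fun x _ => ?_
      rcases eq_or_lt_of_le (hP0 x) with h | h
      · simp [← h]
      · rw [Real.log_div h.ne' (hQ0 x).ne']; ring
    linarith [hKL, heq ▸ hKL]
  have hup : f αstar ≤ (-∑ x, P x * Real.log (P x)) + δ := by
    have h1 := hmin 0
    rw [hCE αstar, hCE 0] at h1
    calc f αstar ≤ f 0 := h1
      _ = -c := hf0
      _ ≤ _ := hKL'
  rw [show (∑ y, Q y ^ (1 + αstar)) = Z from rfl, hHQ]
  rw [abs_le]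
  constructor <;> linarith
end

section
/- Let (X, Y) have joint distribution P on finite sets, with Z drawn from a model conditional Q̂(·|X,Y), and let Q̃(·|Y) be another family of conditional distributions depending only on Y. Suppose Q̂ is calibrated to Q̃ in the sense that α = 0 minimizes α ↦ CE(P‖Q̂_α), where Q̂_α(z|x,y) := Q̂(z|x,y)·Q̃(z|y)^α / Z_α(x,y) and CE(P‖R) := E_{(x,y)∼P}E_{z∼P(·|x,y)}[log(1/R(z|x,y))]. Then, for the joint distribution D(x,y,z) := P(x,y)·Q̂(z|x,y) of (X, Y, Ẑ), one has E_{(x,y)∼P}E_{z∼Q̂(·|x,y)}[log(1/Q̃(z|y))] = E_{(x,y)∼P}E_{z∼P(·|x,y)}[log(1/Q̃(z|y))]. -/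
/-- First-order optimality of calibration: if `α = 0` minimizes the cross entropy of the
tilted family `Q̂_α ∝ Q̂ · Q̃^α`, then the expected log-loss of `Q̃` is the same whether
the last symbol is drawn from the model `Q̂` or from the true conditional `Pc`. -/
theorem stmt16 {X Y Z : Type*} [Fintype X] [Fintype Y] [Fintype Z]
    (Pxy : X → Y → ℝ) (Pc : X → Y → Z → ℝ) (Qh : X → Y → Z → ℝ) (Qt : Y → Z → ℝ)
    (hPxy0 : ∀ x y, 0 ≤ Pxy x y) (hPxy1 : ∑ x, ∑ y, Pxy x y = 1)
    (hPc0 : ∀ x y z, 0 ≤ Pc x y z) (hPc1 : ∀ x y, ∑ z, Pc x y z = 1)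
    (hQh0 : ∀ x y z, 0 < Qh x y z) (hQh1 : ∀ x y, ∑ z, Qh x y z = 1)
    (hQt0 : ∀ y z, 0 < Qt y z) (hQt1 : ∀ y, ∑ z, Qt y z = 1)
    (hcal : ∀ α : ℝ,
      (∑ x, ∑ y, Pxy x y * ∑ z, Pc x y z *
          Real.log (1 / (Qh x y z * Qt y z ^ (0 : ℝ) /
            (∑ z', Qh x y z' * Qt y z' ^ (0 : ℝ))))) ≤
        ∑ x, ∑ y, Pxy x y * ∑ z, Pc x y z *
          Real.log (1 / (Qh x y z * Qt y z ^ α / (∑ z', Qh x y z' * Qt y z' ^ α)))) :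
    (∑ x, ∑ y, Pxy x y * ∑ z, Qh x y z * Real.log (1 / Qt y z)) =
      ∑ x, ∑ y, Pxy x y * ∑ z, Pc x y z * Real.log (1 / Qt y z) := by
  classical
  rcases isEmpty_or_nonempty Z with hZ | hZ
  · simp
  -- positivity of the partition function
  have hZpos : ∀ (x : X) (y : Y) (α : ℝ), 0 < ∑ z', Qh x y z' * Qt y z' ^ α := fun x y α =>
    Finset.sum_pos (fun z _ => mul_pos (hQh0 x y z) (Real.rpow_pos_of_pos (hQt0 y z) α))
      Finset.univ_nonempty
  -- rewrite the cross entropy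
  set G : ℝ → ℝ := fun α => ∑ x, ∑ y, Pxy x y * ∑ z, Pc x y z *
      (Real.log (∑ z', Qh x y z' * Qt y z' ^ α) - Real.log (Qh x y z)
        - α * Real.log (Qt y z)) with hG
  have hFG : ∀ α : ℝ,
      (∑ x, ∑ y, Pxy x y * ∑ z, Pc x y z *
        Real.log (1 / (Qh x y z * Qt y z ^ α / (∑ z', Qh x y z' * Qt y z' ^ α)))) = G α := by
    intro α
    refine Finset.sum_congr rfl fun x _ => Finset.sum_congr rfl fun y _ => ?_
    congr 1
    refine Finset.sum_congr rfl fun z _ => ?_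
    congr 1
    rw [one_div, Real.log_inv, Real.log_div (mul_pos (hQh0 x y z) (Real.rpow_pos_of_pos (hQt0 y z) α)).ne' (ne_of_gt (hZpos x y α)),
      Real.log_mul (ne_of_gt (hQh0 x y z))
        (ne_of_gt (Real.rpow_pos_of_pos (hQt0 y z) α)),
      Real.log_rpow (hQt0 y z)]
    ring
  -- derivative of G at 0
  set D : ℝ → ℝ := fun α => ∑ x, ∑ y, Pxy x y * ∑ z, Pc x y z *
      ((∑ z', Qh x y z' * Qt y z' ^ α * Real.log (Qt y z')) /
        (∑ z', Qh x y z' * Qt y z' ^ α) - Real.log (Qt y z)) with hD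
  have hGderiv : ∀ α : ℝ, HasDerivAt G (D α) α := by
    intro α
    apply HasDerivAt.fun_sum
    intro x _
    apply HasDerivAt.fun_sum
    intro y _
    apply HasDerivAt.const_mul
    apply HasDerivAt.fun_sum
    intro z _
    apply HasDerivAt.const_mul
    have hZd : HasDerivAt (fun a : ℝ => ∑ z', Qh x y z' * Qt y z' ^ a)
        (∑ z', Qh x y z' * Qt y z' ^ α * Real.log (Qt y z')) α := by
      apply HasDerivAt.fun_sum
      intro z' _
      have := ((Real.hasStrictDerivAt_const_rpow (hQt0 y z') α).hasDerivAt).const_mul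
        (Qh x y z')
      simpa [mul_assoc] using this
    have hlog := hZd.log (ne_of_gt (hZpos x y α))
    exact (hlog.sub_const (Real.log (Qh x y z))).sub (hasDerivAt_mul_const (Real.log (Qt y z)))
  -- 0 is a local minimum of G
  have hmin : IsLocalMin G 0 := by
    have : ∀ α, G 0 ≤ G α := fun α => by
      rw [← hFG 0, ← hFG α]; exact hcal α
    exact Filter.Eventually.of_forall fun α => this α
  have hD0 : D 0 = 0 := hmin.hasDerivAt_eq_zero (hGderiv 0)
  -- simplify D 0
  have hD0' : (∑ x, ∑ y, Pxy x y * ∑ z, Pc x y z *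
      ((∑ z', Qh x y z' * Real.log (Qt y z')) - Real.log (Qt y z))) = 0 := by
    rw [← hD0, hD]
    refine Finset.sum_congr rfl fun x _ => Finset.sum_congr rfl fun y _ => ?_
    congr 1
    refine Finset.sum_congr rfl fun z _ => ?_
    congr 2
    simp [Real.rpow_zero, hQh1 x y]
  -- conclude
  have key : ∀ x y, (∑ z, Pc x y z *
      ((∑ z', Qh x y z' * Real.log (Qt y z')) - Real.log (Qt y z)))
      = (∑ z, Qh x y z * Real.log (Qt y z)) - ∑ z, Pc x y z * Real.log (Qt y z) := by
    intro x y
    rw [Finset.sum_congr rfl (fun z _ => mul_sub (Pc x y z) _ _), Finset.sum_sub_distrib,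
      ← Finset.sum_mul, hPc1 x y, one_mul]
  have hfin : (∑ x, ∑ y, Pxy x y * ∑ z, Qh x y z * Real.log (Qt y z)) =
      ∑ x, ∑ y, Pxy x y * ∑ z, Pc x y z * Real.log (Qt y z) := by
    have := hD0'
    rw [Finset.sum_congr rfl (fun x _ => Finset.sum_congr rfl fun y _ => by rw [key x y])] at this
    have h2 : (∑ x, ∑ y, (Pxy x y * ∑ z, Qh x y z * Real.log (Qt y z)
        - Pxy x y * ∑ z, Pc x y z * Real.log (Qt y z))) = 0 := by
      rw [← this]
      exact Finset.sum_congr rfl fun x _ => Finset.sum_congr rfl fun y _ => by ring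
    rw [Finset.sum_congr rfl (fun x _ => Finset.sum_sub_distrib _ _), Finset.sum_sub_distrib,
      sub_eq_zero] at h2
    exact h2
  simp only [one_div, Real.log_inv, mul_neg, Finset.sum_neg_distrib, neg_inj] at *
  exact hfin
end

section
/- Let (X, Y) have joint distribution P on finite sets, Q̂(·|X,Y) a conditional model, and Q̃(·|Y) a conditional model depending only on Y. Define Ẑ by D(x,y,z) = P(x,y)·Q̂(z|x,y). Suppose Q̂ is calibrated to Q̃, meaning α = 0 minimizes α ↦ CE(P‖Q̂_α) for Q̂_α(z|x,y) ∝ Q̂(z|x,y)·Q̃(z|y)^α. Then I(Ẑ; X | Y) ≤ CE(P‖Q̃) − H(Ẑ | X, Y), where CE(P‖Q̃) := E_{(y)∼P}E_{z∼P(·|y)}[log(1/Q̃(z|y))], H(Ẑ|X,Y) := E_{(x,y)∼P}[H(Q̂(·|x,y))], and I(Ẑ; X|Y) is conditional mutual information under D. -/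
open Real Finset

lemma calib17 {X Y Z : Type*} [Fintype X] [Fintype Y] [Fintype Z]
    (Pxy : X → Y → ℝ) (Pc : X → Y → Z → ℝ) (Qh : X → Y → Z → ℝ) (Qt : Y → Z → ℝ)
    (hPc1 : ∀ x y, ∑ z, Pc x y z = 1)
    (hQh0 : ∀ x y z, 0 < Qh x y z) (hQh1 : ∀ x y, ∑ z, Qh x y z = 1)
    (hQt0 : ∀ y z, 0 < Qt y z)
    (hcal : ∀ α : ℝ,
      (∑ x, ∑ y, Pxy x y * ∑ z, Pc x y z *
          Real.log (1 / (Qh x y z * Qt y z ^ (0 : ℝ) /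
            (∑ z', Qh x y z' * Qt y z' ^ (0 : ℝ))))) ≤
        ∑ x, ∑ y, Pxy x y * ∑ z, Pc x y z *
          Real.log (1 / (Qh x y z * Qt y z ^ α / (∑ z', Qh x y z' * Qt y z' ^ α)))) :
    ∑ x, ∑ y, Pxy x y * ∑ z, Qh x y z * Real.log (Qt y z) =
      ∑ x, ∑ y, Pxy x y * ∑ z, Pc x y z * Real.log (Qt y z) := by
  classical
  rcases isEmpty_or_nonempty X with hX | hX
  · simp
  rcases isEmpty_or_nonempty Y with hY | hY
  · simp
  have hZ : Nonempty Z := by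
    by_contra h
    rw [not_nonempty_iff] at h
    have := hQh1 (Classical.arbitrary X) (Classical.arbitrary Y)
    simp at this
  -- the function being minimized
  set F : ℝ → ℝ := fun α =>
    ∑ x, ∑ y, Pxy x y * ∑ z, Pc x y z *
      Real.log (1 / (Qh x y z * Qt y z ^ α / (∑ z', Qh x y z' * Qt y z' ^ α))) with hF
  have hS0 : ∀ (x : X) (y : Y) (α : ℝ), 0 < ∑ z', Qh x y z' * Qt y z' ^ α := fun x y α =>
    Finset.sum_pos (fun z _ => mul_pos (hQh0 x y z) (Real.rpow_pos_of_pos (hQt0 y z) _))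
      Finset.univ_nonempty
  -- rewrite F in a differentiable-friendly form
  have hFeq : ∀ α, F α = ∑ x, ∑ y, Pxy x y *
      ((∑ z, Pc x y z * (-Real.log (Qh x y z) - α * Real.log (Qt y z))) +
        Real.log (∑ z', Qh x y z' * Qt y z' ^ α)) := by
    intro α
    refine Finset.sum_congr rfl fun x _ => Finset.sum_congr rfl fun y _ => ?_
    congr 1
    have hlog : ∀ z : Z, Real.log (1 / (Qh x y z * Qt y z ^ α / (∑ z', Qh x y z' * Qt y z' ^ α)))
        = (-Real.log (Qh x y z) - α * Real.log (Qt y z)) +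
          Real.log (∑ z', Qh x y z' * Qt y z' ^ α) := by
      intro z
      rw [one_div, Real.log_inv, Real.log_div
          (mul_pos (hQh0 x y z) (Real.rpow_pos_of_pos (hQt0 y z) α)).ne'
          (ne_of_gt (hS0 x y α)),
        Real.log_mul (ne_of_gt (hQh0 x y z)) (Real.rpow_pos_of_pos (hQt0 y z) α).ne',
        Real.log_rpow (hQt0 y z)]
      ring
    calc ∑ z, Pc x y z * Real.log (1 / (Qh x y z * Qt y z ^ α / (∑ z', Qh x y z' * Qt y z' ^ α)))
        = ∑ z, (Pc x y z * (-Real.log (Qh x y z) - α * Real.log (Qt y z)) +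
            Pc x y z * Real.log (∑ z', Qh x y z' * Qt y z' ^ α)) := by
          refine Finset.sum_congr rfl fun z _ => ?_
          rw [hlog z]; ring
      _ = _ := by
          rw [Finset.sum_add_distrib, ← Finset.sum_mul, hPc1 x y, one_mul]
  -- derivative of F at 0
  have hderiv : HasDerivAt F
      (∑ x, ∑ y, Pxy x y *
        ((∑ z, Pc x y z * (-Real.log (Qt y z))) + ∑ z, Qh x y z * Real.log (Qt y z))) 0 := by
    have : HasDerivAt (fun α => ∑ x, ∑ y, Pxy x y *
        ((∑ z, Pc x y z * (-Real.log (Qh x y z) - α * Real.log (Qt y z))) +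
          Real.log (∑ z', Qh x y z' * Qt y z' ^ α)))
        (∑ x, ∑ y, Pxy x y *
          ((∑ z, Pc x y z * (-Real.log (Qt y z))) + ∑ z, Qh x y z * Real.log (Qt y z))) 0 := by
      refine HasDerivAt.fun_sum fun x _ => HasDerivAt.fun_sum fun y _ => ?_
      refine HasDerivAt.const_mul _ (HasDerivAt.add ?_ ?_)
      · refine HasDerivAt.fun_sum fun z _ => ?_
        have h1 : HasDerivAt (fun α : ℝ => -Real.log (Qh x y z) - α * Real.log (Qt y z))
            (-Real.log (Qt y z)) 0 := by
          simpa using ((hasDerivAt_id (0:ℝ)).mul_const (Real.log (Qt y z))).const_sub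
            (-Real.log (Qh x y z))
        simpa using h1.const_mul (Pc x y z)
      · have hSder : HasDerivAt (fun α : ℝ => ∑ z', Qh x y z' * Qt y z' ^ α)
            (∑ z', Qh x y z' * (Qt y z' ^ (0:ℝ) * Real.log (Qt y z'))) 0 :=
          HasDerivAt.fun_sum fun z' _ =>
            ((Real.hasStrictDerivAt_const_rpow (hQt0 y z') 0).hasDerivAt).const_mul _
        have := hSder.log (ne_of_gt (hS0 x y 0))
        have hS0val : (∑ z', Qh x y z' * Qt y z' ^ (0:ℝ)) = 1 := by
          simp [Real.rpow_zero, hQh1 x y]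
        have hS'val : (∑ z', Qh x y z' * (Qt y z' ^ (0:ℝ) * Real.log (Qt y z')))
            = ∑ z, Qh x y z * Real.log (Qt y z) := by
          simp [Real.rpow_zero]
        rw [hS0val, hS'val, div_one] at this
        exact this
    exact this.congr_of_eventuallyEq (Filter.Eventually.of_forall fun α => (hFeq α))
  have hmin : IsLocalMin F 0 := Filter.Eventually.of_forall fun α => hcal α
  have hzero := hmin.hasDerivAt_eq_zero hderiv
  -- conclude
  have hsplit : ∑ x, ∑ y, Pxy x y *
      ((∑ z, Pc x y z * (-Real.log (Qt y z))) + ∑ z, Qh x y z * Real.log (Qt y z))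
      = (∑ x, ∑ y, Pxy x y * ∑ z, Qh x y z * Real.log (Qt y z)) -
        (∑ x, ∑ y, Pxy x y * ∑ z, Pc x y z * Real.log (Qt y z)) := by
    rw [← Finset.sum_sub_distrib]
    refine Finset.sum_congr rfl fun x _ => ?_
    rw [← Finset.sum_sub_distrib]
    refine Finset.sum_congr rfl fun y _ => ?_
    rw [← mul_sub]
    congr 1
    have h1 : ∑ z, Pc x y z * (-Real.log (Qt y z)) = -∑ z, Pc x y z * Real.log (Qt y z) := by
      simp [mul_neg, Finset.sum_neg_distrib]
    rw [h1]; ring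
  rw [hsplit] at hzero
  linarith [hzero]


/-- Memory upper bound (Theorem 5.1): if `Q̂` is calibrated to the limited-context model
`Q̃`, then `I(Ẑ; X | Y) ≤ CE(P‖Q̃) - H(Ẑ | X, Y)`, where `(X, Y, Ẑ)` has joint law
`D(x,y,z) = Pxy(x,y) Q̂(z|x,y)`. -/
theorem stmt17 {X Y Z : Type*} [Fintype X] [Fintype Y] [Fintype Z]
    (Pxy : X → Y → ℝ) (Pc : X → Y → Z → ℝ) (Qh : X → Y → Z → ℝ) (Qt : Y → Z → ℝ)
    (hPxy0 : ∀ x y, 0 ≤ Pxy x y) (hPxy1 : ∑ x, ∑ y, Pxy x y = 1)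
    (hPc0 : ∀ x y z, 0 ≤ Pc x y z) (hPc1 : ∀ x y, ∑ z, Pc x y z = 1)
    (hQh0 : ∀ x y z, 0 < Qh x y z) (hQh1 : ∀ x y, ∑ z, Qh x y z = 1)
    (hQt0 : ∀ y z, 0 < Qt y z) (hQt1 : ∀ y, ∑ z, Qt y z = 1)
    (hcal : ∀ α : ℝ,
      (∑ x, ∑ y, Pxy x y * ∑ z, Pc x y z *
          Real.log (1 / (Qh x y z * Qt y z ^ (0 : ℝ) /
            (∑ z', Qh x y z' * Qt y z' ^ (0 : ℝ))))) ≤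
        ∑ x, ∑ y, Pxy x y * ∑ z, Pc x y z *
          Real.log (1 / (Qh x y z * Qt y z ^ α / (∑ z', Qh x y z' * Qt y z' ^ α))))
    (D : X → Y → Z → ℝ) (hD : ∀ x y z, D x y z = Pxy x y * Qh x y z)
    (DY : Y → ℝ) (hDY : ∀ y, DY y = ∑ x, ∑ z, D x y z)
    (DXY : X → Y → ℝ) (hDXY : ∀ x y, DXY x y = ∑ z, D x y z)
    (DYZ : Y → Z → ℝ) (hDYZ : ∀ y z, DYZ y z = ∑ x, D x y z) :
    (∑ x, ∑ y, ∑ z, D x y z *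
        Real.log ((D x y z / DY y) / ((DYZ y z / DY y) * (DXY x y / DY y)))) ≤
      (∑ x, ∑ y, Pxy x y * ∑ z, Pc x y z * Real.log (1 / Qt y z)) -
        (-∑ x, ∑ y, Pxy x y * ∑ z, Qh x y z * Real.log (Qh x y z)) := by
  classical
  have hC := calib17 Pxy Pc Qh Qt hPc1 hQh0 hQh1 hQt0 hcal
  have hDY' : ∀ y, DY y = ∑ x, Pxy x y := by
    intro y
    rw [hDY]
    refine Finset.sum_congr rfl fun x _ => ?_
    simp only [hD]
    rw [← Finset.mul_sum, hQh1, mul_one]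
  have hD0 : ∀ x y z, 0 ≤ D x y z := fun x y z => by
    rw [hD]; exact mul_nonneg (hPxy0 x y) (hQh0 x y z).le
  have hDYZ0 : ∀ y z, 0 ≤ DYZ y z := fun y z => by
    rw [hDYZ]; exact Finset.sum_nonneg fun x _ => hD0 x y z
  have hDY0 : ∀ y, 0 ≤ DY y := fun y => by
    rw [hDY]; exact Finset.sum_nonneg fun x _ => Finset.sum_nonneg fun z _ => hD0 x y z
  have hDYZsum : ∀ y, ∑ z, DYZ y z = DY y := by
    intro y
    rw [hDY]
    simp only [hDYZ]
    exact Finset.sum_comm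
  -- term-wise rewrite of the mutual-information summand
  have hterm : ∀ x y z, D x y z *
      Real.log ((D x y z / DY y) / ((DYZ y z / DY y) * (DXY x y / DY y)))
      = D x y z * Real.log (Qh x y z) +
        D x y z * (Real.log (DY y) - Real.log (DYZ y z)) := by
    intro x y z
    rcases eq_or_lt_of_le (hPxy0 x y) with h | h
    · have hz : D x y z = 0 := by rw [hD, ← h, zero_mul]
      rw [hz]; ring
    · have hDv : D x y z = Pxy x y * Qh x y z := hD x y z
      have hDpos : 0 < D x y z := by rw [hDv]; exact mul_pos h (hQh0 x y z)
      have hDXYv : DXY x y = Pxy x y := by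
        rw [hDXY]
        simp only [hD]
        rw [← Finset.mul_sum, hQh1, mul_one]
      have hDYpos : 0 < DY y := by
        rw [hDY' y]
        exact lt_of_lt_of_le h
          (Finset.single_le_sum (fun x' _ => hPxy0 x' y) (Finset.mem_univ x))
      have hDYZpos : 0 < DYZ y z := by
        rw [hDYZ]
        exact lt_of_lt_of_le hDpos
          (Finset.single_le_sum (fun x' _ => hD0 x' y z) (Finset.mem_univ x))
      have e1 : (D x y z / DY y) / ((DYZ y z / DY y) * (DXY x y / DY y))
          = Qh x y z * (DY y / DYZ y z) := by
        rw [hDv, hDXYv]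
        field_simp
      rw [e1, Real.log_mul (hQh0 x y z).ne' (div_pos hDYpos hDYZpos).ne',
        Real.log_div hDYpos.ne' hDYZpos.ne']
      ring
  -- rewrite the left-hand side
  have hLHS : (∑ x, ∑ y, ∑ z, D x y z *
        Real.log ((D x y z / DY y) / ((DYZ y z / DY y) * (DXY x y / DY y))))
      = (∑ x, ∑ y, ∑ z, D x y z * Real.log (Qh x y z)) +
        ∑ y, ∑ z, DYZ y z * (Real.log (DY y) - Real.log (DYZ y z)) := by
    have h1 : (∑ x, ∑ y, ∑ z, D x y z *
          Real.log ((D x y z / DY y) / ((DYZ y z / DY y) * (DXY x y / DY y))))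
        = ∑ x, ∑ y, ∑ z, (D x y z * Real.log (Qh x y z) +
            D x y z * (Real.log (DY y) - Real.log (DYZ y z))) := by
      refine Finset.sum_congr rfl fun x _ => Finset.sum_congr rfl fun y _ =>
        Finset.sum_congr rfl fun z _ => hterm x y z
    have hswap : (∑ x, ∑ y, ∑ z, D x y z * (Real.log (DY y) - Real.log (DYZ y z)))
        = ∑ y, ∑ z, DYZ y z * (Real.log (DY y) - Real.log (DYZ y z)) := by
      rw [Finset.sum_comm]
      refine Finset.sum_congr rfl fun y _ => ?_
      rw [Finset.sum_comm]
      refine Finset.sum_congr rfl fun z _ => ?_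
      rw [hDYZ, Finset.sum_mul]
    rw [h1]
    simp only [Finset.sum_add_distrib]
    rw [hswap]
  -- rewrite the entropy term on the right
  have hRHS2 : (∑ x, ∑ y, Pxy x y * ∑ z, Qh x y z * Real.log (Qh x y z))
      = ∑ x, ∑ y, ∑ z, D x y z * Real.log (Qh x y z) := by
    refine Finset.sum_congr rfl fun x _ => Finset.sum_congr rfl fun y _ => ?_
    rw [Finset.mul_sum]
    refine Finset.sum_congr rfl fun z _ => ?_
    rw [hD]; ring
  -- rewrite the cross-entropy term using calibration
  have hRHS1 : (∑ x, ∑ y, Pxy x y * ∑ z, Pc x y z * Real.log (1 / Qt y z))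
      = -∑ y, ∑ z, DYZ y z * Real.log (Qt y z) := by
    have e1 : (∑ x, ∑ y, Pxy x y * ∑ z, Pc x y z * Real.log (1 / Qt y z))
        = -∑ x, ∑ y, Pxy x y * ∑ z, Pc x y z * Real.log (Qt y z) := by
      rw [← Finset.sum_neg_distrib]
      refine Finset.sum_congr rfl fun x _ => ?_
      rw [← Finset.sum_neg_distrib]
      refine Finset.sum_congr rfl fun y _ => ?_
      rw [← mul_neg]
      congr 1
      rw [← Finset.sum_neg_distrib]
      refine Finset.sum_congr rfl fun z _ => ?_
      rw [one_div, Real.log_inv]; ring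
    have e2 : (∑ x, ∑ y, Pxy x y * ∑ z, Qh x y z * Real.log (Qt y z))
        = ∑ y, ∑ z, DYZ y z * Real.log (Qt y z) := by
      have : (∑ x, ∑ y, Pxy x y * ∑ z, Qh x y z * Real.log (Qt y z))
          = ∑ x, ∑ y, ∑ z, D x y z * Real.log (Qt y z) := by
        refine Finset.sum_congr rfl fun x _ => Finset.sum_congr rfl fun y _ => ?_
        rw [Finset.mul_sum]
        refine Finset.sum_congr rfl fun z _ => ?_
        rw [hD]; ring
      rw [this, Finset.sum_comm]
      refine Finset.sum_congr rfl fun y _ => ?_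
      rw [Finset.sum_comm]
      refine Finset.sum_congr rfl fun z _ => ?_
      rw [hDYZ, Finset.sum_mul]
    rw [e1, ← hC, e2]
  -- Gibbs' inequality
  have key : ∀ y z, DYZ y z * (Real.log (DY y) - Real.log (DYZ y z) + Real.log (Qt y z))
      ≤ DY y * Qt y z - DYZ y z := by
    intro y z
    rcases eq_or_lt_of_le (hDYZ0 y z) with h | h
    · rw [← h]
      simpa using mul_nonneg (hDY0 y) (hQt0 y z).le
    · have hdy : 0 < DY y := by
        rw [← hDYZsum y]
        exact lt_of_lt_of_le h
          (Finset.single_le_sum (fun z' _ => hDYZ0 y z') (Finset.mem_univ z))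
      have hlog : Real.log (DY y) - Real.log (DYZ y z) + Real.log (Qt y z)
          = Real.log (DY y * Qt y z / DYZ y z) := by
        rw [Real.log_div (mul_pos hdy (hQt0 y z)).ne' h.ne',
          Real.log_mul hdy.ne' (hQt0 y z).ne']
        ring
      rw [hlog]
      have hle := Real.log_le_sub_one_of_pos
        (show 0 < DY y * Qt y z / DYZ y z from div_pos (mul_pos hdy (hQt0 y z)) h)
      calc DYZ y z * Real.log (DY y * Qt y z / DYZ y z)
          ≤ DYZ y z * (DY y * Qt y z / DYZ y z - 1) :=
            mul_le_mul_of_nonneg_left hle h.le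
        _ = DY y * Qt y z - DYZ y z := by field_simp
  have hGibbs : (∑ y, ∑ z, DYZ y z *
      (Real.log (DY y) - Real.log (DYZ y z) + Real.log (Qt y z))) ≤ 0 := by
    refine Finset.sum_nonpos fun y _ => ?_
    calc (∑ z, DYZ y z * (Real.log (DY y) - Real.log (DYZ y z) + Real.log (Qt y z)))
        ≤ ∑ z, (DY y * Qt y z - DYZ y z) :=
          Finset.sum_le_sum fun z _ => key y z
      _ = 0 := by
          rw [Finset.sum_sub_distrib, ← Finset.mul_sum, hQt1, hDYZsum]; ring
  have hsplit2 : (∑ y, ∑ z, DYZ y z *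
        (Real.log (DY y) - Real.log (DYZ y z) + Real.log (Qt y z)))
      = (∑ y, ∑ z, DYZ y z * (Real.log (DY y) - Real.log (DYZ y z))) +
        ∑ y, ∑ z, DYZ y z * Real.log (Qt y z) := by
    rw [← Finset.sum_add_distrib]
    refine Finset.sum_congr rfl fun y _ => ?_
    rw [← Finset.sum_add_distrib]
    refine Finset.sum_congr rfl fun z _ => ?_
    ring
  rw [hLHS, hRHS1]
  rw [hsplit2] at hGibbs
  linarith [hRHS2, hGibbs]
end
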